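/- Let m = 2^t p^s with p an odd prime, and suppose integers ℓ_1, …, ℓ_{m−1} satisfy Σ_j ℓ_j θ_j = 0 where θ_j = 2cos(jπ/m). If for some residue class c mod (m/p) there exists an index j_c ≡ c (mod m/p) with ℓ_{j_c} = ℓ_{m−j_c} = 0, then ℓ_j = ℓ_{m−j} for every j ≡ c (mod m/p). -/

import Mathlib

open Finset Polynomial

noncomputable def Gpoly (p : ℕ) : Polynomial ℚ :=
  ∑ i ∈ Finset.range p, Polynomial.C ((-1:ℚ)^i) * Polynomial.X ^ i

lemma Gpoly_coeff (p k : ℕ) : (Gpoly p).coeff k = if k < p then (-1:ℚ)^k else 0 := by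
  rw [Gpoly, finset_sum_coeff]
  simp only [coeff_C_mul, coeff_X_pow, mul_ite, mul_one, mul_zero]
  rw [Finset.sum_ite_eq (Finset.range p) k (fun i => (-1:ℚ)^i)]
  simp [Finset.mem_range]

lemma Gpoly_mul (p : ℕ) (hop : Odd p) :
    (Polynomial.X + 1) * Gpoly p = Polynomial.X ^ p + 1 := by
  have h := geom_sum_mul (-(Polynomial.X : Polynomial ℚ)) p
  have hG : Gpoly p = ∑ i ∈ Finset.range p, (-(Polynomial.X : Polynomial ℚ)) ^ i := by
    unfold Gpoly
    refine Finset.sum_congr rfl fun i _ => ?_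
    rw [neg_pow]
    simp [mul_comm]
    ring
  rw [hG]
  have hodd : (-(Polynomial.X : Polynomial ℚ)) ^ p = -(Polynomial.X ^ p) := hop.neg_pow _
  rw [hodd] at h
  linear_combination -h

lemma Gpoly_natDegree (p : ℕ) (hp : 0 < p) : (Gpoly p).natDegree = p - 1 := by
  have h1 : (Gpoly p).natDegree ≤ p - 1 := by
    rw [natDegree_le_iff_coeff_eq_zero]
    intro N hN
    rw [Gpoly_coeff]
    rw [if_neg (by omega)]
  have h2 : p - 1 ≤ (Gpoly p).natDegree := by
    apply Polynomial.le_natDegree_of_ne_zero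
    rw [Gpoly_coeff, if_pos (by omega)]
    positivity
  omega

lemma Gpoly_monic (p : ℕ) (hp : 0 < p) (hop : Odd p) : (Gpoly p).Monic := by
  unfold Polynomial.Monic Polynomial.leadingCoeff
  rw [Gpoly_natDegree p hp, Gpoly_coeff, if_pos (by omega)]
  rcases hop with ⟨k, hk⟩
  subst hk
  simp [pow_succ, pow_mul]

lemma coeff_expand_mul_small {n : ℕ} (hn : 0 < n) (G W : Polynomial ℚ)
    (hW : ∀ k, n ≤ k → W.coeff k = 0) (q r : ℕ) (hr : r < n) :
    ((Polynomial.expand ℚ n G) * W).coeff (q * n + r) = G.coeff q * W.coeff r := by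
  rw [Polynomial.coeff_mul]
  rw [Finset.sum_eq_single (q * n, r)]
  · simp only [Polynomial.coeff_expand hn]
    rw [if_pos (dvd_mul_left n q), Nat.mul_div_cancel q hn]
  · rintro ⟨x, y⟩ hmem hne
    rw [Finset.HasAntidiagonal.mem_antidiagonal] at hmem
    simp only at hmem ⊢
    by_cases hd : n ∣ x
    · obtain ⟨u, hu⟩ := hd
      subst hu
      rw [mul_comm q n] at hmem
      by_cases hy : y < n
      · exfalso
        have h1 : y % n = r % n := by
          rw [← Nat.mul_add_mod n u y, hmem, Nat.mul_add_mod]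
        have hy' : y = r := by
          rwa [Nat.mod_eq_of_lt hy, Nat.mod_eq_of_lt hr] at h1
        subst hy'
        have : u = q := by
          have h2 : n * u = n * q := by omega
          exact Nat.eq_of_mul_eq_mul_left hn h2
        apply hne
        simp [this, mul_comm]
      · rw [hW y (by omega), mul_zero]
    · rw [Polynomial.coeff_expand hn, if_neg hd, zero_mul]
  · intro h
    exact absurd (Finset.HasAntidiagonal.mem_antidiagonal.2 (by simp)) h

lemma keyB (p n : ℕ) (hp : 0 < p) (hop : Odd p) (hn : 0 < n) (P : Polynomial ℚ)
    (hdvd : Polynomial.expand ℚ n (Gpoly p) ∣ P) (hdeg : P.natDegree < 2 * p * n)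
    (r : ℕ) (hr : r < n) :
    ∀ q, q < p → P.coeff (q * n + r) - P.coeff ((q + p) * n + r) =
      (-1:ℚ)^q * (P.coeff (0 * n + r) - P.coeff ((0 + p) * n + r)) := by
  obtain ⟨Q, hPQ⟩ := hdvd
  set H := Polynomial.expand ℚ n (Gpoly p) with hH
  by_cases hQ0 : Q = 0
  · subst hQ0; simp [hPQ]
  have hGmon : (Gpoly p).Monic := Gpoly_monic p hp hop
  have hHmon : H.Monic := hGmon.expand hn
  have hHdeg : H.natDegree = (p - 1) * n := by
    rw [hH, Polynomial.natDegree_expand, Gpoly_natDegree p hp]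
  -- degree of Q
  have hQdeg : Q.natDegree < (p + 1) * n := by
    have h1 : P.natDegree = H.natDegree + Q.natDegree :=
      hPQ ▸ Polynomial.natDegree_mul hHmon.ne_zero hQ0
    have e4 : 2 * p * n = (p - 1) * n + (p + 1) * n := by
      have hp' : p - 1 + (p + 1) = 2 * p := by omega
      calc 2 * p * n = (p - 1 + (p + 1)) * n := by rw [hp']
        _ = (p - 1) * n + (p + 1) * n := by ring
    omega
  set M : Polynomial ℚ := Polynomial.X ^ n + Polynomial.C 1 with hM
  have hMmon : M.Monic := Polynomial.monic_X_pow_add_C (1:ℚ) hn.ne'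
  have hMdeg : M.natDegree = n := Polynomial.natDegree_X_pow_add_C
  set V := Q /ₘ M with hV
  set W := Q %ₘ M with hW
  have hQVW : Q = M * V + W := by
    rw [hV, hW]
    linear_combination (Polynomial.modByMonic_add_div Q M).symm
  have hWdeg : ∀ k, n ≤ k → W.coeff k = 0 := by
    intro k hk
    apply Polynomial.coeff_eq_zero_of_natDegree_lt
    have hM1 : M ≠ 1 := by
      intro h
      rw [h] at hMdeg
      simp at hMdeg
      omega
    have h2 : W.natDegree < n := by
      rw [hW, ← hMdeg]
      exact Polynomial.natDegree_modByMonic_lt Q hMmon hM1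
    omega
  have hVdeg : V.natDegree < p * n := by
    have h3 : V.natDegree = Q.natDegree - n := by
      rw [hV, Polynomial.natDegree_divByMonic Q hMmon, hMdeg]
    have e5 : (p + 1) * n = p * n + n := by ring
    have hpn : 0 < p * n := Nat.mul_pos hp hn
    omega
  have hHM : H * M = Polynomial.X ^ (p * n) + 1 := by
    have e1 : M = Polynomial.expand ℚ n (Polynomial.X + 1) := by
      simp [hM, Polynomial.expand_X]
    rw [hH, e1, ← map_mul, mul_comm (Gpoly p), Gpoly_mul p hop]
    simp [Polynomial.expand_X, map_pow, ← pow_mul, mul_comm n p]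
  have hP2 : P = (Polynomial.X ^ (p * n) + 1) * V + H * W := by
    rw [hPQ, hQVW]
    rw [← hHM]; ring
  -- coefficient of P at q'*n + r for q' < 2p
  have hcoeff : ∀ q', q' * n + r < p * n →
      P.coeff (q' * n + r) = V.coeff (q' * n + r) + (Gpoly p).coeff q' * W.coeff r := by
    intro q' hlt
    rw [hP2, Polynomial.coeff_add, coeff_expand_mul_small hn _ _ hWdeg q' r hr]
    congr 1
    have : (Polynomial.X ^ (p * n) + 1) * V
        = V * Polynomial.X ^ (p * n) + V := by ring
    rw [this, Polynomial.coeff_add, Polynomial.coeff_mul_X_pow', if_neg (by omega)]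
    ring
  have hcoeff2 : ∀ q', p * n ≤ q' * n + r →
      P.coeff (q' * n + r) = V.coeff (q' * n + r - p * n)
        + (Gpoly p).coeff q' * W.coeff r := by
    intro q' hge
    rw [hP2, Polynomial.coeff_add, coeff_expand_mul_small hn _ _ hWdeg q' r hr]
    congr 1
    have : (Polynomial.X ^ (p * n) + 1) * V
        = V * Polynomial.X ^ (p * n) + V := by ring
    rw [this, Polynomial.coeff_add, Polynomial.coeff_mul_X_pow', if_pos hge,
      Polynomial.coeff_eq_zero_of_natDegree_lt (lt_of_lt_of_le hVdeg hge)]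
    ring
  have hbq : ∀ q, q < p → P.coeff (q * n + r) - P.coeff ((q + p) * n + r)
      = (-1:ℚ)^q * W.coeff r := by
    intro q hq
    have hlt : q * n + r < p * n := by
      calc q * n + r < q * n + n := by omega
      _ = (q + 1) * n := by ring
      _ ≤ p * n := Nat.mul_le_mul_right n (by omega)
    have hge : p * n ≤ (q + p) * n + r := by
      have : p * n ≤ (q + p) * n := Nat.mul_le_mul_right n (by omega)
      omega
    have hsub : (q + p) * n + r - p * n = q * n + r := by
      have : (q + p) * n = q * n + p * n := by ring
      omega
    rw [hcoeff q hlt, hcoeff2 (q + p) hge, hsub,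
      Gpoly_coeff, Gpoly_coeff, if_pos hq, if_neg (by omega)]
    ring
  intro q hq
  rw [hbq q hq, hbq 0 hp]
  ring

lemma keyDvd (p s t m n : ℕ) (hp : p.Prime) (hodd : Odd p) (hs : 1 ≤ s)
    (hm : m = 2 ^ t * p ^ s) (hn : n = 2 ^ t * p ^ (s - 1)) (P : Polynomial ℚ)
    (hPz : Polynomial.aeval (Complex.exp (Real.pi * Complex.I / m)) P = 0) :
    Polynomial.expand ℚ n (Gpoly p) ∣ P := by
  have hp0 : 0 < p := hp.pos
  have hp3 : 3 ≤ p := by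
    have := hp.two_le
    rcases hodd with ⟨k, hk⟩
    omega
  have hnm : m = n * p := by
    rw [hm, hn]
    have : p ^ (s - 1) * p = p ^ s := by
      rw [← pow_succ]
      congr 1
      omega
    rw [mul_assoc, this]
  have hn0 : 0 < n := by
    rw [hn]; positivity
  have hm0 : 0 < m := by rw [hnm]; positivity
  set ζ : ℂ := Complex.exp (Real.pi * Complex.I / m) with hζdef
  have hζ : IsPrimitiveRoot ζ (2 * m) := by
    have h := Complex.isPrimitiveRoot_exp (2 * m) (by omega)
    convert h using 2
    have hmC : (m : ℂ) ≠ 0 := Nat.cast_ne_zero.2 hm0.ne'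
    push_cast
    field_simp
  set H := Polynomial.expand ℚ n (Gpoly p) with hH
  have hGmon : (Gpoly p).Monic := Gpoly_monic p hp0 hodd
  have hHmon : H.Monic := hGmon.expand hn0
  -- ζ^n is a root of Gpoly p
  have hζm : ζ ^ m = -1 := by
    rw [hζdef, ← Complex.exp_nat_mul]
    have hmC : (m : ℂ) ≠ 0 := Nat.cast_ne_zero.2 hm0.ne'
    have harg : (m : ℂ) * (↑Real.pi * Complex.I / ↑m) = ↑Real.pi * Complex.I := by
      field_simp
    rw [harg]
    exact Complex.exp_pi_mul_I
  have hωp : (ζ ^ n) ^ p = -1 := by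
    rw [← pow_mul, ← hnm]; exact hζm
  have hωne : (ζ ^ n : ℂ) + 1 ≠ 0 := by
    intro h
    have hω : (ζ ^ n : ℂ) = -1 := by linear_combination h
    have h2 : ζ ^ (2 * n) = 1 := by
      rw [two_mul, pow_add, hω]
      ring
    exact hζ.pow_ne_one_of_pos_of_lt (by omega)
      (by rw [hnm]; nlinarith) h2
  have hGroot : Polynomial.aeval (ζ ^ n) (Gpoly p) = 0 := by
    have h1 : (ζ ^ n + 1) * Polynomial.aeval (ζ ^ n) (Gpoly p) = 0 := by
      have := congrArg (Polynomial.aeval (ζ ^ n : ℂ)) (Gpoly_mul p hodd)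
      simp only [map_mul, map_add, map_one, map_pow, Polynomial.aeval_X] at this
      rw [this, hωp]
      ring
    rcases mul_eq_zero.1 h1 with h | h
    · exact absurd h hωne
    · exact h
  have hHroot : Polynomial.aeval ζ H = 0 := by
    rw [hH, Polynomial.expand_aeval]
    exact hGroot
  -- ζ is integral over ℚ
  have hint : IsIntegral ℚ ζ := by
    refine ⟨Polynomial.X ^ (2 * m) - Polynomial.C 1, ?_, ?_⟩
    · exact Polynomial.monic_X_pow_sub_C 1 (by omega)
    · simp [hζ.pow_eq_one]
  have hmindvd : minpoly ℚ ζ ∣ H := minpoly.dvd ℚ ζ hHroot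
  -- degrees
  have hHdeg : H.natDegree = (p - 1) * n := by
    rw [hH, Polynomial.natDegree_expand, Gpoly_natDegree p hp0]
  have hmindeg : (minpoly ℚ ζ).natDegree = (p - 1) * n := by
    rw [← Polynomial.cyclotomic_eq_minpoly_rat hζ (by omega),
      Polynomial.natDegree_cyclotomic]
    have h2m : 2 * m = 2 ^ (t + 1) * p ^ s := by rw [hm]; ring
    rw [h2m, Nat.totient_mul, Nat.totient_prime_pow Nat.prime_two (by omega),
      Nat.totient_prime_pow hp (by omega), hn]
    · simp only [Nat.add_sub_cancel]
      ring
    · exact Nat.Coprime.pow _ _ (Nat.coprime_two_left.2 hodd)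
  have hmin : minpoly ℚ ζ = H := by
    obtain ⟨D, hD⟩ := hmindvd
    have hmne : minpoly ℚ ζ ≠ 0 := minpoly.ne_zero hint
    have hDne : D ≠ 0 := by
      intro h
      rw [h, mul_zero] at hD
      exact hHmon.ne_zero hD
    have hDdeg : D.natDegree = 0 := by
      have := Polynomial.natDegree_mul hmne hDne
      rw [← hD, hHdeg, hmindeg] at this
      omega
    obtain ⟨a, ha⟩ := Polynomial.natDegree_eq_zero.1 hDdeg
    have ha1 : a = 1 := by
      have hlc := congrArg Polynomial.leadingCoeff hD
      rw [Polynomial.leadingCoeff_mul, hHmon.leadingCoeff,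
        (minpoly.monic hint).leadingCoeff, one_mul, ← ha,
        Polynomial.leadingCoeff_C] at hlc
      exact hlc.symm
    rw [hD, ← ha, ha1]
    simp
  rw [← hmin]
  exact minpoly.dvd ℚ ζ hPz

noncomputable def Ppoly (m : ℕ) (ℓ : ℕ → ℤ) : Polynomial ℚ :=
  ∑ j ∈ Finset.Ico 1 m, Polynomial.C ((ℓ j : ℚ)) *
    (Polynomial.X ^ j + Polynomial.X ^ (2 * m - j))

lemma Ppoly_coeff (m : ℕ) (ℓ : ℕ → ℤ) (k : ℕ) (h1 : 1 ≤ k) (h2 : k ≤ m - 1) :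
    (Ppoly m ℓ).coeff k = (ℓ k : ℚ) := by
  have hm2 : 2 ≤ m := by omega
  rw [Ppoly, finset_sum_coeff]
  simp only [coeff_C_mul, coeff_add, coeff_X_pow]
  rw [Finset.sum_eq_single k]
  · rw [if_pos rfl, if_neg (by omega)]
    ring
  · intro j hj hne
    rw [Finset.mem_Ico] at hj
    rw [if_neg (fun h => hne h.symm), if_neg (by omega)]
    ring
  · intro h
    exact absurd (Finset.mem_Ico.2 ⟨h1, by omega⟩) h

lemma Ppoly_coeff2 (m : ℕ) (ℓ : ℕ → ℤ) (k : ℕ) (h1 : 1 ≤ k) (h2 : k ≤ m - 1) :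
    (Ppoly m ℓ).coeff (m + k) = (ℓ (m - k) : ℚ) := by
  have hm2 : 2 ≤ m := by omega
  rw [Ppoly, finset_sum_coeff]
  simp only [coeff_C_mul, coeff_add, coeff_X_pow]
  rw [Finset.sum_eq_single (m - k)]
  · rw [if_neg (by omega), if_pos (by omega)]
    ring
  · intro j hj hne
    rw [Finset.mem_Ico] at hj
    rw [if_neg (by omega), if_neg (by omega)]
    ring
  · intro h
    exact absurd (Finset.mem_Ico.2 ⟨by omega, by omega⟩) h

lemma Ppoly_natDegree (m : ℕ) (ℓ : ℕ → ℤ) (hm : 1 ≤ m) :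
    (Ppoly m ℓ).natDegree ≤ 2 * m - 1 := by
  apply Polynomial.natDegree_sum_le_of_forall_le
  intro j hj
  rw [Finset.mem_Ico] at hj
  apply le_trans (Polynomial.natDegree_C_mul_le _ _)
  apply le_trans (Polynomial.natDegree_add_le _ _)
  simp only [Polynomial.natDegree_X_pow]
  omega

lemma Ppoly_aeval (m : ℕ) (ℓ : ℕ → ℤ) (hm : 1 ≤ m)
    (hrel : ∑ j ∈ Finset.Ico 1 m, (ℓ j : ℝ) * (2 * Real.cos (j * Real.pi / m)) = 0) :
    Polynomial.aeval (Complex.exp (Real.pi * Complex.I / m)) (Ppoly m ℓ) = 0 := by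
  set ζ : ℂ := Complex.exp (Real.pi * Complex.I / m) with hζdef
  have hmC : (m : ℂ) ≠ 0 := Nat.cast_ne_zero.2 (by omega)
  have hterm : ∀ j ∈ Finset.Ico 1 m,
      (ζ ^ j + ζ ^ (2 * m - j) : ℂ) = ((2 * Real.cos (j * Real.pi / m) : ℝ) : ℂ) := by
    intro j hj
    rw [Finset.mem_Ico] at hj
    have hj2m : j ≤ 2 * m := by omega
    have e1 : ζ ^ j = Complex.exp ((j : ℂ) * (Real.pi * Complex.I / m)) := by
      rw [hζdef, ← Complex.exp_nat_mul]
    have e2 : ζ ^ (2 * m - j) = Complex.exp (-((j : ℂ) * (Real.pi * Complex.I / m))) := by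
      rw [hζdef, ← Complex.exp_nat_mul]
      have e2' : ((2 * m - j : ℕ) : ℂ) * (Real.pi * Complex.I / m)
          = 2 * (Real.pi : ℂ) * Complex.I + -((j : ℂ) * (Real.pi * Complex.I / m)) := by
        push_cast [Nat.cast_sub hj2m]
        field_simp
        ring
      rw [e2', Complex.exp_add, Complex.exp_two_pi_mul_I, one_mul]
    rw [e1, e2]
    have e3 : (j : ℂ) * (Real.pi * Complex.I / m) = ((j * Real.pi / m : ℝ) : ℂ) * Complex.I := by
      push_cast
      field_simp
    rw [e3]
    have e4 : Complex.exp (-(((j * Real.pi / m : ℝ) : ℂ) * Complex.I))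
        = Complex.exp (-((j * Real.pi / m : ℝ) : ℂ) * Complex.I) := by
      rw [neg_mul]
    rw [e4, ← Complex.two_cos, ← Complex.ofReal_cos]
    push_cast
    ring
  rw [Ppoly, map_sum]
  have : ∀ j ∈ Finset.Ico 1 m,
      Polynomial.aeval ζ (Polynomial.C ((ℓ j : ℚ)) *
        (Polynomial.X ^ j + Polynomial.X ^ (2 * m - j)))
      = ((ℓ j : ℝ) * (2 * Real.cos (j * Real.pi / m)) : ℝ) := by
    intro j hj
    rw [map_mul, map_add, map_pow, map_pow, Polynomial.aeval_X, Polynomial.aeval_C,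
      hterm j hj, eq_ratCast (algebraMap ℚ ℂ)]
    push_cast
    ring
  rw [Finset.sum_congr rfl this, ← Complex.ofReal_sum, hrel, Complex.ofReal_zero]

/-- If some index `j_c ≡ c (mod m/p)` has `ℓ_{j_c} = ℓ_{m−j_c} = 0`, then `ℓ_j = ℓ_{m−j}`
for every `j ≡ c (mod m/p)`, given the relation `∑ ℓ_j θ_j = 0` with `θ_j = 2cos(jπ/m)`. -/
theorem stmt15 (p s t m : ℕ) (hp : Nat.Prime p) (hodd : Odd p) (hs : 1 ≤ s)
    (hm : m = 2 ^ t * p ^ s) (ℓ : ℕ → ℤ)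
    (hrel : ∑ j ∈ Finset.Ico 1 m, (ℓ j : ℝ) * (2 * Real.cos (j * Real.pi / m)) = 0)
    (c jc : ℕ) (hjc1 : 1 ≤ jc) (hjc2 : jc ≤ m - 1) (hjcc : jc % (m / p) = c)
    (h0 : ℓ jc = 0) (h0' : ℓ (m - jc) = 0) :
    ∀ j : ℕ, 1 ≤ j → j ≤ m - 1 → j % (m / p) = c → ℓ j = ℓ (m - j) := by
  have hp0 : 0 < p := hp.pos
  set n := 2 ^ t * p ^ (s - 1) with hn
  have hnm : m = n * p := by
    rw [hm, hn, mul_assoc, ← pow_succ]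
    congr 2
    omega
  have hn0 : 0 < n := by rw [hn]; positivity
  have hm0 : 1 ≤ m := by rw [hnm]; exact Nat.one_le_iff_ne_zero.2 (by positivity)
  have hm2 : 2 ≤ m := by omega
  have hmdiv : m / p = n := by rw [hnm]; exact Nat.mul_div_cancel n hp0
  rw [hmdiv] at hjcc
  set P := Ppoly m ℓ with hP
  have hPz := Ppoly_aeval m ℓ hm0 hrel
  have hdvd := keyDvd p s t m n hp hodd hs hm hn P hPz
  have hdeg : P.natDegree < 2 * p * n := by
    have hd : P.natDegree ≤ 2 * m - 1 := Ppoly_natDegree m ℓ hm0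
    have e : 2 * p * n = 2 * m := by rw [hnm]; ring
    rw [e]
    omega
  have hc : c < n := by rw [← hjcc]; exact Nat.mod_lt _ hn0
  have key := keyB p n hp0 hodd hn0 P hdvd hdeg c hc
  set B : ℚ := P.coeff (0 * n + c) - P.coeff ((0 + p) * n + c) with hBdef
  -- generic fact: for any k in [1, m-1] with k % n = c,
  -- P.coeff k - P.coeff (m + k) = (-1)^(k/n) * B
  have main : ∀ k : ℕ, 1 ≤ k → k ≤ m - 1 → k % n = c →
      ((ℓ k : ℚ) - (ℓ (m - k) : ℚ)) = (-1:ℚ)^(k / n) * B := by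
    intro k hk1 hk2 hkc
    have hq : k / n < p := by
      rw [Nat.div_lt_iff_lt_mul hn0]
      have : k < m := by omega
      rw [hnm] at this
      have e7 : p * n = n * p := Nat.mul_comm _ _
      omega
    have hkeq : k / n * n + c = k := by
      have h5 := Nat.div_add_mod k n
      rw [hkc] at h5
      have h6 : n * (k / n) = k / n * n := Nat.mul_comm _ _
      omega
    have hkeq2 : (k / n + p) * n + c = m + k := by
      have e : (k / n + p) * n = k / n * n + p * n := by ring
      have e2 : p * n = m := by rw [hnm]; ring
      have h6 : n * (k / n) = k / n * n := Nat.mul_comm _ _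
      omega
    have := key (k / n) hq
    rw [hkeq, hkeq2] at this
    rw [hP, Ppoly_coeff m ℓ k hk1 hk2, Ppoly_coeff2 m ℓ k hk1 hk2] at this
    exact this
  -- the given index forces B = 0
  have hB : B = 0 := by
    have h := main jc hjc1 hjc2 hjcc
    rw [h0, h0'] at h
    have h2 : (-1:ℚ)^(jc / n) * B = 0 := by
      rw [← h]
      push_cast
      ring
    rcases mul_eq_zero.1 h2 with h' | h'
    · exact absurd h' (pow_ne_zero _ (by norm_num))
    · exact h'
  intro j hj1 hj2 hjc
  rw [hmdiv] at hjc
  have h := main j hj1 hj2 hjc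
  rw [hB, mul_zero, sub_eq_zero] at h
  exact_mod_cast h
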